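/- The isotropic function σ̂(B) = dev₃ B = B − (1/3) tr(B) I on PSym(3) satisfies the strict Baker–Ericksen inequalities and is semi-invertible (indeed B = (1/3) tr(B) I + σ̂(B)), but it is not injective (σ̂(I) = σ̂(0·I + anything proportional to identity) collapses all multiples of I to 0). -/

import Mathlib

open Matrix

def IsEigenvector {n : ℕ} (A : Matrix (Fin n) (Fin n) ℝ) (v : Fin n → ℝ) : Prop :=
  v ≠ 0 ∧ ∃ μ : ℝ, A.mulVec v = μ • v

/-- A matrix is orthogonal. -/
def IsOrthogonal {n : ℕ} (Q : Matrix (Fin n) (Fin n) ℝ) : Prop :=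
  Q * Qᵀ = 1 ∧ Qᵀ * Q = 1

/-- PSym(3): positive-definite symmetric real 3×3 matrices. -/
def PSym3 : Set (Matrix (Fin 3) (Fin 3) ℝ) := {B | B.IsSymm ∧ B.PosDef}

/-- The deviatoric part: dev₃ B = B − (1/3) tr(B) I. -/
noncomputable def dev3 (B : Matrix (Fin 3) (Fin 3) ℝ) : Matrix (Fin 3) (Fin 3) ℝ :=
  B - ((1 / 3 : ℝ) * B.trace) • 1

/-- σ̂ is semi-invertible: B = ψ₀ I + ψ₁ σ̂(B) + ψ₂ σ̂(B)² with coefficients ψᵢ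
depending only on the matrix invariants of B. -/
def SemiInvertible (σ : Matrix (Fin 3) (Fin 3) ℝ → Matrix (Fin 3) (Fin 3) ℝ) : Prop :=
  ∃ ψ : Fin 3 → (Matrix (Fin 3) (Fin 3) ℝ → ℝ),
    (∀ k : Fin 3, ∀ B ∈ PSym3, ∀ Q : Matrix (Fin 3) (Fin 3) ℝ, IsOrthogonal Q →
      ψ k (Qᵀ * B * Q) = ψ k B) ∧
    ∀ B ∈ PSym3, B = ψ 0 B • 1 + ψ 1 B • σ B + ψ 2 B • (σ B) ^ 2

/-- The strict Baker–Ericksen inequalities. -/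
def StrictBakerEricksen
    (σ : Matrix (Fin 3) (Fin 3) ℝ → Matrix (Fin 3) (Fin 3) ℝ) : Prop :=
  ∀ B ∈ PSym3, ∀ v w : Fin 3 → ℝ, v ≠ 0 → w ≠ 0 →
    ∀ lami lamj si sj : ℝ, 0 < lami → 0 < lamj →
      B.mulVec v = (lami ^ 2) • v → (σ B).mulVec v = si • v →
      B.mulVec w = (lamj ^ 2) • w → (σ B).mulVec w = sj • w →
      lami > lamj → si > sj


lemma smul_eq_smul_of_ne {v : Fin 3 → ℝ} (hv : v ≠ 0) {a b : ℝ}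
    (h : a • v = b • v) : a = b := by
  by_contra hab
  apply hv
  have : (a - b) • v = 0 := by rw [sub_smul, h, sub_self]
  exact (smul_eq_zero.mp this).resolve_left (sub_ne_zero.mpr hab)

lemma dev3_mulVec (B : Matrix (Fin 3) (Fin 3) ℝ) (v : Fin 3 → ℝ) :
    (dev3 B).mulVec v = B.mulVec v - ((1 / 3 : ℝ) * B.trace) • v := by
  simp [dev3, sub_mulVec, Matrix.smul_mulVec, Matrix.one_mulVec]

/-- σ̂(B) = dev₃ B satisfies the strict Baker–Ericksen
inequalities and is semi-invertible (indeed B = (1/3) tr(B) I + σ̂(B)),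
but it is not injective on PSym(3). -/
theorem dev3_strictBE_semiInvertible_not_injective :
    StrictBakerEricksen dev3 ∧
    (∀ B : Matrix (Fin 3) (Fin 3) ℝ, B = ((1 / 3 : ℝ) * B.trace) • 1 + dev3 B) ∧
    SemiInvertible dev3 ∧
    ¬ (∀ B₁ ∈ PSym3, ∀ B₂ ∈ PSym3, dev3 B₁ = dev3 B₂ → B₁ = B₂) := by
  refine ⟨?_, ?_, ?_, ?_⟩
  · intro B _ v w hv hw lami lamj si sj hli hlj hBv hSv hBw hSw hij
    have h1 : (dev3 B).mulVec v = (lami ^ 2 - (1 / 3 : ℝ) * B.trace) • v := by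
      rw [dev3_mulVec, hBv, sub_smul]
    have h2 : (dev3 B).mulVec w = (lamj ^ 2 - (1 / 3 : ℝ) * B.trace) • w := by
      rw [dev3_mulVec, hBw, sub_smul]
    have e1 : si = lami ^ 2 - (1 / 3 : ℝ) * B.trace :=
      smul_eq_smul_of_ne hv (hSv ▸ h1)
    have e2 : sj = lamj ^ 2 - (1 / 3 : ℝ) * B.trace :=
      smul_eq_smul_of_ne hw (hSw ▸ h2)
    have : lamj ^ 2 < lami ^ 2 := by nlinarith
    rw [e1, e2]; linarith
  · intro B; simp [dev3]
  · refine ⟨![fun B => (1 / 3 : ℝ) * B.trace, fun _ => 1, fun _ => 0], ?_, ?_⟩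
    · intro k B _ Q hQ
      fin_cases k
      · show (1/3 : ℝ) * (Qᵀ * B * Q).trace = (1/3 : ℝ) * B.trace
        rw [Matrix.trace_mul_cycle, hQ.1, Matrix.one_mul]
      · rfl
      · rfl
    · intro B _
      show B = ((1/3 : ℝ) * B.trace) • 1 + (1:ℝ) • dev3 B + (0:ℝ) • (dev3 B)^2
      simp [dev3]
  · intro h
    have h1 : (1 : Matrix (Fin 3) (Fin 3) ℝ) ∈ PSym3 :=
      ⟨Matrix.isSymm_one, Matrix.PosDef.one⟩
    have h2 : ((2 : ℝ) • 1 : Matrix (Fin 3) (Fin 3) ℝ) ∈ PSym3 := by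
      constructor
      · simp [Matrix.IsSymm, Matrix.transpose_smul]
      · exact Matrix.PosDef.one.smul (by norm_num)
    have d1 : dev3 (1 : Matrix (Fin 3) (Fin 3) ℝ) = 0 := by
      unfold dev3
      rw [Matrix.trace_one]
      norm_num
    have d2 : dev3 ((2 : ℝ) • (1 : Matrix (Fin 3) (Fin 3) ℝ)) = 0 := by
      unfold dev3
      rw [Matrix.trace_smul, Matrix.trace_one]
      norm_num
    have hd : dev3 (1 : Matrix (Fin 3) (Fin 3) ℝ) = dev3 ((2 : ℝ) • 1) := d1.trans d2.symm
    have := h 1 h1 ((2:ℝ) • 1) h2 hd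
    have : (1 : Matrix (Fin 3) (Fin 3) ℝ) 0 0 = ((2:ℝ) • 1 : Matrix (Fin 3) (Fin 3) ℝ) 0 0 := by rw [← this]
    simp [Matrix.one_apply] at this
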